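/- Let A ∈ ℝ^{n×n}, p(λ) = λ^k + c₁λ^{k-1} + ⋯ + c_k a real monic polynomial with p(A) = 0, C the companion matrix of p, and D = {t ∈ ℝ : σ(I - tA) ∩ ℝ⁻₀ = ∅}. If (f₁(t),…,f_k(t))ᵀ is the solution on D of the initial value problem (I - tC)·x'(t) = -e₂, x(0) = 0, then for all t ∈ D, log(I - tA) = f₁(t)I + f₂(t)A + ⋯ + f_k(t)A^{k-1}. -/

import Mathlib

open Matrix Finset

/-- The companion matrix of `λ^k + c₁λ^{k-1} + ⋯ + c_k`. -/
noncomputable def companion (k : ℕ) (c : ℕ → ℝ) : Matrix (Fin k) (Fin k) ℝ :=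
  fun i j => if (j : ℕ) = k - 1 then -c (k - (i : ℕ)) else if (i : ℕ) = (j : ℕ) + 1 then 1 else 0

/-- `X` is the principal logarithm of `A`. -/
def IsPrincipalLog {n : ℕ} (A X : Matrix (Fin n) (Fin n) ℝ) : Prop :=
  NormedSpace.exp X = A ∧
    ∀ μ ∈ spectrum ℂ (X.map Complex.ofReal), -Real.pi < μ.im ∧ μ.im < Real.pi

/- ### Auxiliary lemmas -/

/-- Componentwise (ℕ-indexed) version of the companion-matrix ODE. -/
lemma ode_nat {k : ℕ} (hk : 2 ≤ k) (c : ℕ → ℝ) (t : ℝ) (u : Fin k → ℝ)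
    (h : ((1 : Matrix (Fin k) (Fin k) ℝ) - t • companion k c).mulVec u =
      -Pi.single (⟨1, Nat.lt_of_lt_of_le one_lt_two hk⟩ : Fin k) 1)
    (v : ℕ → ℝ) (hv : ∀ m (hm : m < k), v m = u ⟨m, hm⟩) :
    ∀ m, m < k → v m - t * ((if m = 0 then 0 else v (m - 1)) - c (k - m) * v (k - 1)) =
      -(if m = 1 then 1 else 0) := by
  intro m hm
  have h1 := congrFun h ⟨m, hm⟩
  simp only [Matrix.mulVec, dotProduct, Matrix.sub_apply, Matrix.smul_apply,
    Matrix.one_apply, smul_eq_mul, Pi.neg_apply, Pi.single_apply] at h1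
  have hterm : ∀ j : Fin k, ((if (⟨m, hm⟩ : Fin k) = j then (1:ℝ) else 0) -
        t * companion k c ⟨m, hm⟩ j) * u j =
      (if j = (⟨m, hm⟩ : Fin k) then u j else 0)
      - t * ((if j = (⟨k - 1, by omega⟩ : Fin k) then -(c (k - m) * u j) else 0)
        + (if 1 ≤ m ∧ j = (⟨m - 1, by omega⟩ : Fin k) then u j else 0)) := by
    intro j
    simp only [companion, Fin.ext_iff]
    split_ifs <;> (first | ring1 | (exfalso; omega))
  rw [Finset.sum_congr rfl (fun j _ => hterm j)] at h1
  rw [Finset.sum_sub_distrib, ← Finset.mul_sum, Finset.sum_add_distrib] at h1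
  rw [Finset.sum_ite_eq' Finset.univ (⟨m, hm⟩ : Fin k) u] at h1
  rw [Finset.sum_ite_eq' Finset.univ (⟨k - 1, by omega⟩ : Fin k)
    (fun j => -(c (k - m) * u j))] at h1
  have hsecond : (∑ j : Fin k, if 1 ≤ m ∧ j = (⟨m - 1, by omega⟩ : Fin k) then u j else 0)
      = if m = 0 then 0 else v (m - 1) := by
    by_cases h0 : m = 0
    · simp [h0]
    · have h1m : 1 ≤ m := by omega
      simp only [h1m, true_and]
      rw [Finset.sum_ite_eq' Finset.univ (⟨m - 1, by omega⟩ : Fin k) u]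
      simp [h0, hv (m-1) (by omega)]
  rw [hsecond] at h1
  simp only [Finset.mem_univ, if_true] at h1
  simp only [Fin.mk.injEq] at h1
  rw [hv m hm, hv (k-1) (by omega)]
  rw [← h1]
  ring

/-- The key algebraic identity : `(1 - tA) * (∑ uᵢ Aⁱ) = -A`. -/
lemma keyB {n k : ℕ} (hk : 2 ≤ k) (A : Matrix (Fin n) (Fin n) ℝ) (c : ℕ → ℝ)
    (hp : A ^ k + ∑ i ∈ range k, c (i + 1) • A ^ (k - (i + 1)) = 0)
    (t : ℝ) (u : Fin k → ℝ)
    (h : ((1 : Matrix (Fin k) (Fin k) ℝ) - t • companion k c).mulVec u =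
      -Pi.single (⟨1, Nat.lt_of_lt_of_le one_lt_two hk⟩ : Fin k) 1) :
    ((1 : Matrix (Fin n) (Fin n) ℝ) - t • A) * (∑ i : Fin k, u i • A ^ (i : ℕ)) = -A := by
  classical
  set v : ℕ → ℝ := fun m => if hm : m < k then u ⟨m, hm⟩ else 0 with hvdef
  have hv : ∀ m (hm : m < k), v m = u ⟨m, hm⟩ := fun m hm => dif_pos hm
  have hode := ode_nat hk c t u h v hv
  have hS : (∑ i : Fin k, u i • A ^ (i : ℕ)) = ∑ m ∈ range k, v m • A ^ m := by
    rw [← Fin.sum_univ_eq_sum_range (fun m => v m • A ^ m) k]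
    exact Finset.sum_congr rfl fun i _ => by rw [hv i i.isLt]
  rw [hS]
  have expand : ((1 : Matrix (Fin n) (Fin n) ℝ) - t • A) * (∑ m ∈ range k, v m • A ^ m)
      = (∑ m ∈ range k, v m • A ^ m) - t • (∑ m ∈ range k, v m • A ^ (m + 1)) := by
    have hterm : ∀ i ∈ range k, A * (v i • A ^ i) = v i • A ^ (i + 1) := fun i _ => by
      rw [mul_smul_comm, ← pow_succ']
    rw [sub_mul, one_mul, smul_mul_assoc, Finset.mul_sum, Finset.sum_congr rfl hterm]
  rw [expand]
  have hAk : A ^ k = -∑ m ∈ range k, (c (k - m)) • A ^ m := by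
    have h1 : A ^ k = -∑ i ∈ range k, c (i + 1) • A ^ (k - (i + 1)) :=
      eq_neg_of_add_eq_zero_left hp
    rw [h1]
    congr 1
    rw [← Finset.sum_range_reflect (fun m => c (k - m) • A ^ m) k]
    refine Finset.sum_congr rfl fun j hj => ?_
    have hj' := Finset.mem_range.1 hj
    have e1 : k - (k - 1 - j) = j + 1 := by omega
    have e2 : k - 1 - j = k - (j + 1) := by omega
    rw [e1, e2]
  have h1 : ∑ m ∈ range k, v m • A ^ (m + 1)
      = ∑ m ∈ range k, ((if m = 0 then 0 else v (m - 1)) - c (k - m) * v (k - 1)) • A ^ m := by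
    have step1 : ∑ m ∈ range k, v m • A ^ (m + 1)
        = (∑ m ∈ range (k - 1), v m • A ^ (m + 1)) + v (k - 1) • A ^ k := by
      conv_lhs => rw [show k = (k - 1) + 1 from by omega, Finset.sum_range_succ]
      rw [show k - 1 + 1 = k from by omega]
    have step2 : ∑ m ∈ range (k - 1), v m • A ^ (m + 1)
        = ∑ m ∈ range k, (if m = 0 then 0 else v (m - 1)) • A ^ m := by
      conv_rhs => rw [show k = (k - 1) + 1 from by omega, Finset.sum_range_succ']
      simp only [Nat.add_sub_cancel, Nat.succ_ne_zero, if_false]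
      simp
    have step3 : v (k - 1) • A ^ k = ∑ m ∈ range k, (-(c (k - m) * v (k - 1))) • A ^ m := by
      rw [hAk, smul_neg, Finset.smul_sum, ← Finset.sum_neg_distrib]
      refine Finset.sum_congr rfl fun m _ => ?_
      rw [smul_smul, ← neg_smul, mul_comm]
    rw [step1, step2, step3, ← Finset.sum_add_distrib]
    refine Finset.sum_congr rfl fun m _ => ?_
    rw [← add_smul, ← sub_eq_add_neg]
  rw [h1, Finset.smul_sum, ← Finset.sum_sub_distrib]
  have h2 : ∀ m ∈ range k,
      v m • A ^ m - t • (((if m = 0 then 0 else v (m - 1)) - c (k - m) * v (k - 1)) • A ^ m)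
      = (-(if m = 1 then (1:ℝ) else 0)) • A ^ m := by
    intro m hm
    rw [smul_smul, ← sub_smul]
    congr 1
    exact hode m (Finset.mem_range.1 hm)
  rw [Finset.sum_congr rfl h2]
  have h3 : ∀ m ∈ range k, (-(if m = 1 then (1:ℝ) else 0)) • A ^ m
      = -(if m = 1 then A ^ m else 0) := by
    intro m _
    by_cases hm1 : m = 1 <;> simp [hm1]
  rw [Finset.sum_congr rfl h3, Finset.sum_neg_distrib,
    Finset.sum_ite_eq' (range k) 1 (fun m => A ^ m)]
  simp [Finset.mem_range.2 (by omega : 1 < k)]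

lemma map_one_sub_smul {n : ℕ} (A : Matrix (Fin n) (Fin n) ℝ) (s : ℝ) :
    ((1 : Matrix (Fin n) (Fin n) ℝ) - s • A).map Complex.ofReal
      = 1 - (s : ℂ) • A.map Complex.ofReal := by
  ext i j
  by_cases hij : i = j <;>
    simp [Matrix.map_apply, Matrix.sub_apply, Matrix.smul_apply, Matrix.one_apply, hij]

lemma mem_spec_iff_det {n : ℕ} (M : Matrix (Fin n) (Fin n) ℂ) (z : ℂ) :
    z ∈ spectrum ℂ M ↔ ((z • (1 : Matrix (Fin n) (Fin n) ℂ)) - M).det = 0 := by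
  rw [spectrum.mem_iff, Matrix.isUnit_iff_isUnit_det, isUnit_iff_ne_zero, not_not,
    Algebra.algebraMap_eq_smul_one]

lemma det_shift {n : ℕ} (B : Matrix (Fin n) (Fin n) ℂ) (a lam : ℂ) :
    ((((1 : ℂ) - a * lam) • (1 : Matrix (Fin n) (Fin n) ℂ)) - (1 - a • B)).det
      = (-a) ^ n * ((lam • (1 : Matrix (Fin n) (Fin n) ℂ)) - B).det := by
  have : (((1 : ℂ) - a * lam) • (1 : Matrix (Fin n) (Fin n) ℂ)) - (1 - a • B)
      = (-a) • ((lam • (1 : Matrix (Fin n) (Fin n) ℂ)) - B) := by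
    ext i j
    by_cases hij : i = j <;>
      simp only [Matrix.sub_apply, Matrix.smul_apply, Matrix.one_apply, hij, if_true, if_false,
        smul_eq_mul] <;> ring
  rw [this, Matrix.det_smul]
  simp

/-- The domain `D` is star-shaped around `0`. -/
lemma starD {n : ℕ} (A : Matrix (Fin n) (Fin n) ℝ) {t : ℝ}
    (ht : spectrum ℂ (((1 : Matrix (Fin n) (Fin n) ℝ) - t • A).map Complex.ofReal) ∩
      {z : ℂ | ∃ r : ℝ, r ≤ 0 ∧ z = (r : ℂ)} = ∅) :
    ∀ s ∈ Set.uIcc (0:ℝ) t,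
      spectrum ℂ (((1 : Matrix (Fin n) (Fin n) ℝ) - s • A).map Complex.ofReal) ∩
        {z : ℂ | ∃ r : ℝ, r ≤ 0 ∧ z = (r : ℂ)} = ∅ := by
  intro s hs
  rw [Set.eq_empty_iff_forall_notMem] at ht ⊢
  rintro z ⟨hz, r, hr, rfl⟩
  rw [map_one_sub_smul, mem_spec_iff_det] at hz
  by_cases hn : n = 0
  · subst hn
    rw [Matrix.det_fin_zero] at hz
    exact one_ne_zero hz
  by_cases hs0 : s = 0
  · subst hs0
    have he : ((r : ℂ) • (1 : Matrix (Fin n) (Fin n) ℂ)) -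
        (1 - (0 : ℝ) • A.map Complex.ofReal) = ((r : ℂ) - 1) • 1 := by
      ext i j
      by_cases hij : i = j <;>
        simp [Matrix.sub_apply, Matrix.smul_apply, Matrix.one_apply, hij]
    rw [show ((0:ℝ):ℂ) = ((0:ℝ) : ℂ) from rfl] at hz
    rw [show ((0:ℝ):ℂ) • A.map Complex.ofReal = (0 : ℝ) • A.map Complex.ofReal by
      ext i j; simp] at hz
    rw [he, Matrix.det_smul, Matrix.det_one, mul_one] at hz
    have : (r : ℂ) - 1 = 0 := by
      have := pow_eq_zero_iff (n := Fintype.card (Fin n)) (by simp; omega) |>.1 hz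
      exact this
    have : (r : ℂ) = 1 := by linear_combination this
    have : r = 1 := by exact_mod_cast this
    linarith
  · set lam : ℝ := (1 - r) / s with hlam
    have key : (r : ℂ) = 1 - (s : ℂ) * (lam : ℂ) := by
      have hs0' : (s : ℂ) ≠ 0 := Complex.ofReal_ne_zero.mpr hs0
      rw [hlam]
      push_cast
      field_simp
      ring
    rw [key, det_shift] at hz
    have hdet0 : (((lam : ℂ) • (1 : Matrix (Fin n) (Fin n) ℂ)) - A.map Complex.ofReal).det = 0 := by
      rcases mul_eq_zero.1 hz with h | h
      · exfalso
        apply pow_ne_zero n (neg_ne_zero.2 _) h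
        exact_mod_cast hs0
      · exact h
    have harith : 1 - t * lam ≤ 0 := by
      rcases le_total 0 t with h0t | ht0
      · rw [Set.uIcc_of_le h0t] at hs
        obtain ⟨hs1, hs2⟩ := hs
        have hspos : 0 < s := lt_of_le_of_ne hs1 (Ne.symm hs0)
        rw [hlam, sub_nonpos]
        rw [show t * ((1 - r) / s) = t * (1 - r) / s by ring, le_div_iff₀ hspos, one_mul]
        nlinarith
      · rw [Set.uIcc_of_ge ht0] at hs
        obtain ⟨hs1, hs2⟩ := hs
        have hsneg : s < 0 := lt_of_le_of_ne hs2 hs0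
        rw [hlam, sub_nonpos, show t * ((1 - r) / s) = t * (1 - r) / s by ring,
          le_div_iff_of_neg hsneg, one_mul]
        nlinarith
    apply ht ((1 - t * lam : ℝ) : ℂ)
    refine ⟨?_, 1 - t * lam, harith, rfl⟩
    rw [map_one_sub_smul, mem_spec_iff_det]
    have : ((1 - t * lam : ℝ) : ℂ) = 1 - (t : ℂ) * (lam : ℂ) := by push_cast; ring
    rw [this, det_shift, hdet0, mul_zero]

/-- Generic ODE-to-exponential lemma in a real Banach algebra. -/
theorem exp_ode {𝔸 : Type*} [NormedRing 𝔸] [NormedAlgebra ℝ 𝔸] [CompleteSpace 𝔸]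
    (B : 𝔸) (D : Set ℝ) (hstar : ∀ t ∈ D, Set.uIcc (0:ℝ) t ⊆ D)
    (g g' : ℝ → 𝔸)
    (hg : ∀ t ∈ D, HasDerivAt g (g' t) t)
    (hg0 : g 0 = 0)
    (hcgg : ∀ s u, Commute (g s) (g u))
    (hcg'g : ∀ s u, Commute (g' s) (g u))
    (hcg'B : ∀ s, Commute (g' s) B)
    (hcgB : ∀ s, Commute (g s) B)
    (hodeq : ∀ t ∈ D, (1 - t • B) * g' t = -B) :
    ∀ t ∈ D, NormedSpace.exp (g t) = 1 - t • B := by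
  intro t ht
  letI : NormedAlgebra ℚ 𝔸 := NormedAlgebra.restrictScalars ℚ ℝ 𝔸
  set φ : ℝ → 𝔸 := fun s => NormedSpace.exp (-(g s)) * (1 - s • B) with hφdef
  have hφd : ∀ s ∈ D, HasDerivAt φ 0 s := by
    intro s hs
    have hexp : ∀ y, NormedSpace.exp (-(g y)) =
        NormedSpace.exp (-(g y) + g s) * NormedSpace.exp (-(g s)) := by
      intro y
      rw [← NormedSpace.exp_add_of_commute
        ((((hcgg y s).neg_left).add_left (Commute.refl (g s))).neg_right)]
      congr 1
      abel
    have h1 : HasDerivAt (fun y => NormedSpace.exp (-(g y)))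
        (-(g' s) * NormedSpace.exp (-(g s))) s := by
      have hinner : HasDerivAt (fun y => -(g y) + g s) (-(g' s)) s :=
        ((hg s hs).neg).add_const _
      have hF : HasFDerivAt NormedSpace.exp (1 : 𝔸 →L[ℝ] 𝔸) (-(g s) + g s) := by
        rw [neg_add_cancel]
        exact hasFDerivAt_exp_zero
      have hcomp := hF.comp_hasDerivAt s hinner
      have hmul := hcomp.mul_const (NormedSpace.exp (-(g s)))
      simp only [ContinuousLinearMap.one_apply] at hmul
      rw [show (fun y => NormedSpace.exp (-(g y))) =
        fun y => NormedSpace.exp (-(g y) + g s) * NormedSpace.exp (-(g s)) from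
        funext hexp]
      exact hmul
    have h2 : HasDerivAt (fun y : ℝ => 1 - y • B) (-B) s := by
      simpa using ((hasDerivAt_id s).smul_const B).const_sub 1
    have h3 := h1.mul h2
    set E := NormedSpace.exp (-(g s)) with hE
    have hcE2 : Commute E (1 - s • B) :=
      (((Commute.one_right _).sub_right (((hcgB s).neg_left).smul_right s))).exp_left
    have hcBE : Commute B E := (((hcgB s).symm).neg_right).exp_right
    have hcomm' : g' s * (1 - s • B) = -B := by
      have hc : Commute (g' s) (1 - s • B) :=
        (Commute.one_right _).sub_right ((hcg'B s).smul_right s)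
      rw [hc.eq]
      exact hodeq s hs
    have e1 : (-(g' s) * E) * (1 - s • B) = B * E := by
      calc (-(g' s) * E) * (1 - s • B) = -((g' s * E) * (1 - s • B)) := by
            rw [neg_mul, neg_mul]
        _ = -(g' s * (E * (1 - s • B))) := by rw [mul_assoc]
        _ = -(g' s * ((1 - s • B) * E)) := by rw [hcE2.eq]
        _ = -((g' s * (1 - s • B)) * E) := by rw [mul_assoc]
        _ = -((-B) * E) := by rw [hcomm']
        _ = B * E := by rw [neg_mul, neg_neg]
    have e2 : E * (-B) = -(B * E) := by rw [mul_neg, ← hcBE.eq]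
    have : (-(g' s) * E) * (1 - s • B) + E * (-B) = 0 := by
      rw [e1, e2, add_neg_cancel]
    rw [← this]
    exact h3
  have hconst : φ t = φ 0 := by
    rcases le_total 0 t with h0t | ht0
    · have hseg : Set.Icc (0:ℝ) t ⊆ D := by
        rw [← Set.uIcc_of_le h0t]; exact hstar t ht
      exact constant_of_has_deriv_right_zero
        (fun x hx => (hφd x (hseg hx)).continuousAt.continuousWithinAt)
        (fun x hx => (hφd x (hseg (Set.mem_Icc_of_Ico hx))).hasDerivWithinAt)
        t (Set.right_mem_Icc.2 h0t)
    · have hseg : Set.Icc t (0:ℝ) ⊆ D := by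
        rw [← Set.uIcc_of_ge ht0]; exact hstar t ht
      exact (constant_of_has_deriv_right_zero
        (fun x hx => (hφd x (hseg hx)).continuousAt.continuousWithinAt)
        (fun x hx => (hφd x (hseg (Set.mem_Icc_of_Ico hx))).hasDerivWithinAt)
        0 (Set.right_mem_Icc.2 ht0)).symm
  have hφ0 : φ 0 = 1 := by
    simp [hφdef, hg0, NormedSpace.exp_zero]
  have h1 : NormedSpace.exp (-(g t)) * (1 - t • B) = 1 := hconst.trans hφ0
  calc NormedSpace.exp (g t)
      = NormedSpace.exp (g t) * (NormedSpace.exp (-(g t)) * (1 - t • B)) := by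
        rw [h1, mul_one]
    _ = (NormedSpace.exp (g t) * NormedSpace.exp (-(g t))) * (1 - t • B) := by
        rw [mul_assoc]
    _ = 1 - t • B := by
        rw [← NormedSpace.exp_add_of_commute ((Commute.refl (g t)).neg_right),
          add_neg_cancel, NormedSpace.exp_zero, one_mul]

lemma map_sum_smul_pow {n k : ℕ} (A : Matrix (Fin n) (Fin n) ℝ) (w : Fin k → ℝ) :
    (∑ i : Fin k, w i • A ^ (i : ℕ)).map Complex.ofReal
      = ∑ i : Fin k, ((w i : ℂ)) • (A.map Complex.ofReal) ^ (i : ℕ) := by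
  have hpow : ∀ m : ℕ, (A ^ m).map Complex.ofReal = (A.map Complex.ofReal) ^ m := by
    intro m
    have := map_pow (Complex.ofRealHom.mapMatrix : Matrix (Fin n) (Fin n) ℝ →+* Matrix (Fin n) (Fin n) ℂ) A m
    exact this
  ext a b
  simp only [Matrix.map_apply, Matrix.sum_apply, Matrix.smul_apply, smul_eq_mul]
  push_cast
  refine Finset.sum_congr rfl fun i _ => ?_
  rw [← hpow]
  simp [Matrix.map_apply]

/-- Putzer-type formula for the logarithm: if `(f₁,…,f_k)ᵀ` solves the IVP
`(I - tC)ẋ = -e₂`, `x(0) = 0` on `D = {t : σ(I - tA) ∩ ℝ⁻₀ = ∅}`, then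
`log(I - tA) = f₁(t)I + f₂(t)A + ⋯ + f_k(t)A^{k-1}` on `D`. -/
theorem log_eq_putzer (n k : ℕ) (hk : 2 ≤ k) (A : Matrix (Fin n) (Fin n) ℝ) (c : ℕ → ℝ)
    (hp : A ^ k + ∑ i ∈ range k, c (i + 1) • A ^ (k - (i + 1)) = 0)
    (D : Set ℝ)
    (hD : D = {t : ℝ |
      spectrum ℂ (((1 : Matrix (Fin n) (Fin n) ℝ) - t • A).map Complex.ofReal) ∩
        {z : ℂ | ∃ r : ℝ, r ≤ 0 ∧ z = (r : ℂ)} = ∅})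
    (f f' : ℝ → Fin k → ℝ)
    (hderiv : ∀ t ∈ D, ∀ i : Fin k, HasDerivAt (fun s => f s i) (f' t i) t)
    (hinit : f 0 = 0)
    (hode : ∀ t ∈ D,
      ((1 : Matrix (Fin k) (Fin k) ℝ) - t • companion k c).mulVec (f' t) =
        -Pi.single (⟨1, by omega⟩ : Fin k) 1) :
    ∀ t ∈ D, IsPrincipalLog ((1 : Matrix (Fin n) (Fin n) ℝ) - t • A)
      (∑ i : Fin k, f t i • A ^ (i : ℕ)) := by
  have hDmem : ∀ s : ℝ, s ∈ D ↔
      spectrum ℂ (((1 : Matrix (Fin n) (Fin n) ℝ) - s • A).map Complex.ofReal) ∩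
        {z : ℂ | ∃ r : ℝ, r ≤ 0 ∧ z = (r : ℂ)} = ∅ := by
    intro s; rw [hD]; exact Iff.rfl
  have hstar : ∀ t ∈ D, Set.uIcc (0:ℝ) t ⊆ D := by
    intro t ht s hs
    rw [hDmem] at ht ⊢
    exact starD A ht s hs
  set Aℂ : Matrix (Fin n) (Fin n) ℂ := A.map Complex.ofReal with hAc
  -- real exponential identity
  have hexpR : ∀ s ∈ D, NormedSpace.exp (∑ i : Fin k, f s i • A ^ (i : ℕ)) = 1 - s • A := by
    letI : SeminormedRing (Matrix (Fin n) (Fin n) ℝ) := Matrix.linftyOpSemiNormedRing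
    letI : NormedRing (Matrix (Fin n) (Fin n) ℝ) := Matrix.linftyOpNormedRing
    letI : NormedAlgebra ℝ (Matrix (Fin n) (Fin n) ℝ) := Matrix.linftyOpNormedAlgebra
    refine exp_ode A D hstar (fun s => ∑ i : Fin k, f s i • A ^ (i : ℕ))
      (fun s => ∑ i : Fin k, f' s i • A ^ (i : ℕ)) ?_ ?_ ?_ ?_ ?_ ?_ ?_
    · intro s hs
      exact HasDerivAt.fun_sum fun i _ => (hderiv s hs i).smul_const _
    · simp [hinit]
    · intro s u
      refine Commute.sum_left _ _ _ fun i _ => Commute.sum_right _ _ _ fun j _ => ?_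
      exact (((Commute.refl A).pow_pow _ _).smul_left _).smul_right _
    · intro s u
      refine Commute.sum_left _ _ _ fun i _ => Commute.sum_right _ _ _ fun j _ => ?_
      exact (((Commute.refl A).pow_pow _ _).smul_left _).smul_right _
    · intro s
      refine Commute.sum_left _ _ _ fun i _ => ?_
      exact ((Commute.refl A).pow_left _).smul_left _
    · intro s
      refine Commute.sum_left _ _ _ fun i _ => ?_
      exact ((Commute.refl A).pow_left _).smul_left _
    · intro s hs
      exact keyB hk A c hp s (f' s) (hode s hs)
  intro t ht
  constructor
  · exact hexpR t ht
  -- spectrum bound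
  intro μ hμ
  by_cases hn : n = 0
  · exfalso
    subst hn
    haveI : Subsingleton (Matrix (Fin 0) (Fin 0) ℂ) :=
      ⟨fun M N => by ext i j; exact i.elim0⟩
    rw [spectrum.mem_iff] at hμ
    exact hμ (isUnit_of_subsingleton _)
  have hn1 : 0 < n := Nat.pos_of_ne_zero hn
  -- complex exponential identity
  have hexpC : ∀ s ∈ D, NormedSpace.exp (∑ i : Fin k, ((f s i : ℂ)) • Aℂ ^ (i : ℕ))
      = 1 - (s : ℂ) • Aℂ := by
    letI : SeminormedRing (Matrix (Fin n) (Fin n) ℂ) := Matrix.linftyOpSemiNormedRing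
    letI : NormedRing (Matrix (Fin n) (Fin n) ℂ) := Matrix.linftyOpNormedRing
    letI : NormedAlgebra ℝ (Matrix (Fin n) (Fin n) ℂ) := Matrix.linftyOpNormedAlgebra
    letI : NormedAlgebra ℂ (Matrix (Fin n) (Fin n) ℂ) := Matrix.linftyOpNormedAlgebra
    have hsmul : ∀ (s : ℝ) (M : Matrix (Fin n) (Fin n) ℂ), (s : ℂ) • M = s • M := by
      intro s M; ext i j; simp [Matrix.smul_apply, Complex.real_smul]
    have base : ∀ s ∈ D, NormedSpace.exp (∑ i : Fin k, ((f s i : ℂ)) • Aℂ ^ (i : ℕ))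
        = 1 - s • Aℂ := by
      refine exp_ode Aℂ D hstar (fun s => ∑ i : Fin k, ((f s i : ℂ)) • Aℂ ^ (i : ℕ))
        (fun s => ∑ i : Fin k, ((f' s i : ℂ)) • Aℂ ^ (i : ℕ)) ?_ ?_ ?_ ?_ ?_ ?_ ?_
      · intro s hs
        exact HasDerivAt.fun_sum fun i _ => ((hderiv s hs i).ofReal_comp).smul_const _
      · simp [hinit]
      · intro s u
        refine Commute.sum_left _ _ _ fun i _ => Commute.sum_right _ _ _ fun j _ => ?_
        exact (((Commute.refl Aℂ).pow_pow _ _).smul_left _).smul_right _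
      · intro s u
        refine Commute.sum_left _ _ _ fun i _ => Commute.sum_right _ _ _ fun j _ => ?_
        exact (((Commute.refl Aℂ).pow_pow _ _).smul_left _).smul_right _
      · intro s
        refine Commute.sum_left _ _ _ fun i _ => ?_
        exact ((Commute.refl Aℂ).pow_left _).smul_left _
      · intro s
        refine Commute.sum_left _ _ _ fun i _ => ?_
        exact ((Commute.refl Aℂ).pow_left _).smul_left _
      · intro s hs
        have hR := keyB hk A c hp s (f' s) (hode s hs)
        have hmap := congrArg (fun M => M.map Complex.ofReal) hR
        have hmm : ((((1 : Matrix (Fin n) (Fin n) ℝ) - s • A)) * (∑ i : Fin k, f' s i • A ^ (i : ℕ))).map Complex.ofReal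
            = (((1 : Matrix (Fin n) (Fin n) ℝ) - s • A)).map Complex.ofReal *
              (∑ i : Fin k, f' s i • A ^ (i : ℕ)).map Complex.ofReal :=
          Matrix.map_mul (f := Complex.ofRealHom)
        rw [hmm] at hmap
        rw [map_one_sub_smul, map_sum_smul_pow] at hmap
        rw [hsmul, show (-A).map Complex.ofReal = -Aℂ by
          ext i j; simp [hAc, Matrix.map_apply]] at hmap
        exact hmap
    intro s hs
    rw [base s hs, hsmul]
  -- spectral mapping setup
  have hμ' : μ ∈ spectrum ℂ (∑ i : Fin k, ((f t i : ℂ)) • Aℂ ^ (i : ℕ)) := by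
    rwa [map_sum_smul_pow] at hμ
  have hspecA : (spectrum ℂ Aℂ).Nonempty := by
    letI : SeminormedRing (Matrix (Fin n) (Fin n) ℂ) := Matrix.linftyOpSemiNormedRing
    letI : NormedRing (Matrix (Fin n) (Fin n) ℂ) := Matrix.linftyOpNormedRing
    letI : NormedAlgebra ℂ (Matrix (Fin n) (Fin n) ℂ) := Matrix.linftyOpNormedAlgebra
    haveI : Nontrivial (Matrix (Fin n) (Fin n) ℂ) := by
      refine nontrivial_of_ne 1 0 fun hcon => ?_
      have := congrFun (congrFun hcon ⟨0, hn1⟩) ⟨0, hn1⟩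
      simp [Matrix.one_apply] at this
    exact spectrum.nonempty Aℂ
  set Q : ℝ → Polynomial ℂ :=
    fun s => ∑ i : Fin k, Polynomial.C ((f s i : ℂ)) * Polynomial.X ^ (i : ℕ) with hQ
  have haeval : ∀ s, Polynomial.aeval Aℂ (Q s) = ∑ i : Fin k, ((f s i : ℂ)) • Aℂ ^ (i : ℕ) := by
    intro s
    rw [hQ]
    simp only [_root_.map_sum, _root_.map_mul, Polynomial.aeval_C, _root_.map_pow, Polynomial.aeval_X]
    refine Finset.sum_congr rfl fun i _ => ?_
    rw [Algebra.smul_def]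
  have heval : ∀ s lam, Polynomial.eval lam (Q s)
      = ∑ i : Fin k, ((f s i : ℂ)) * lam ^ (i : ℕ) := by
    intro s lam
    rw [hQ]
    simp [Polynomial.eval_finset_sum]
  have hmapspec : ∀ s, spectrum ℂ (∑ i : Fin k, ((f s i : ℂ)) • Aℂ ^ (i : ℕ))
      = (fun z => Polynomial.eval z (Q s)) '' spectrum ℂ Aℂ := by
    intro s
    rw [← haeval s]
    exact spectrum.map_polynomial_aeval_of_nonempty Aℂ (Q s) hspecA
  rw [hmapspec t] at hμ'
  obtain ⟨lam, hlam, hμeq⟩ := hμ'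
  -- no value of the path crosses the negative reals
  have hmem : ∀ s ∈ Set.uIcc (0:ℝ) t,
      ¬ ∃ r : ℝ, r ≤ 0 ∧ Complex.exp (Polynomial.eval lam (Q s)) = (r : ℂ) := by
    intro s hs hcon
    obtain ⟨r, hr, hre⟩ := hcon
    have hsD : s ∈ D := hstar t ht hs
    have h1 : Polynomial.eval lam (Q s) ∈
        spectrum ℂ (∑ i : Fin k, ((f s i : ℂ)) • Aℂ ^ (i : ℕ)) := by
      rw [hmapspec s]
      exact ⟨lam, hlam, rfl⟩
    have h2 : Complex.exp (Polynomial.eval lam (Q s)) ∈ spectrum ℂ (1 - (s : ℂ) • Aℂ) := by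
      rw [← hexpC s hsD, Complex.exp_eq_exp_ℂ]
      letI : SeminormedRing (Matrix (Fin n) (Fin n) ℂ) := Matrix.linftyOpSemiNormedRing
      letI : NormedRing (Matrix (Fin n) (Fin n) ℂ) := Matrix.linftyOpNormedRing
      letI : NormedAlgebra ℂ (Matrix (Fin n) (Fin n) ℂ) := Matrix.linftyOpNormedAlgebra
      exact spectrum.exp_mem_exp _ h1
    rw [hDmem] at hsD
    refine Set.eq_empty_iff_forall_notMem.1 hsD (Complex.exp (Polynomial.eval lam (Q s))) ?_
    refine ⟨?_, r, hr, hre⟩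
    rw [map_one_sub_smul]
    exact h2
  -- the imaginary part path
  set hfun : ℝ → ℝ := fun s => (Polynomial.eval lam (Q s)).im with hfundef
  have hcont : ContinuousOn hfun (Set.uIcc (0:ℝ) t) := by
    intro x hx
    have hxD : x ∈ D := hstar t ht hx
    apply ContinuousAt.continuousWithinAt
    have hH : ContinuousAt (fun s => Polynomial.eval lam (Q s)) x := by
      simp only [heval]
      refine tendsto_finset_sum _ fun i _ => ?_
      exact (Complex.continuous_ofReal.continuousAt.comp
        (hderiv x hxD i).continuousAt).mul continuousAt_const
    exact Complex.continuous_im.continuousAt.comp hH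
  have him0 : hfun 0 = 0 := by
    simp [hfundef, heval, hinit]
  have hnotpi : ∀ s ∈ Set.uIcc (0:ℝ) t, hfun s ≠ Real.pi ∧ hfun s ≠ -Real.pi := by
    intro s hs
    constructor <;> intro habs <;> apply hmem s hs
    · refine ⟨-Real.exp ((Polynomial.eval lam (Q s)).re), neg_nonpos.mpr (Real.exp_pos _).le, ?_⟩
      apply Complex.ext <;>
        simp [Complex.exp_re, Complex.exp_im, hfundef ▸ habs, Real.cos_pi, Real.sin_pi]
    · refine ⟨-Real.exp ((Polynomial.eval lam (Q s)).re), neg_nonpos.mpr (Real.exp_pos _).le, ?_⟩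
      apply Complex.ext <;>
        simp [Complex.exp_re, Complex.exp_im, hfundef ▸ habs, Real.cos_pi, Real.sin_pi]
  have hμim : μ.im = hfun t := by rw [← hμeq]
  rw [hμim]
  constructor
  · by_contra hle
    push_neg at hle
    have hmem' : -Real.pi ∈ Set.uIcc (hfun 0) (hfun t) := by
      rw [him0, Set.mem_uIcc]
      right
      exact ⟨hle, by linarith [Real.pi_pos]⟩
    obtain ⟨s, hsmem, hval⟩ := intermediate_value_uIcc hcont hmem'
    exact (hnotpi s hsmem).2 hval
  · by_contra hle
    push_neg at hle
    have hmem' : Real.pi ∈ Set.uIcc (hfun 0) (hfun t) := by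
      rw [him0, Set.mem_uIcc]
      left
      exact ⟨by linarith [Real.pi_pos], hle⟩
    obtain ⟨s, hsmem, hval⟩ := intermediate_value_uIcc hcont hmem'
    exact (hnotpi s hsmem).1 hval
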